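/- Let a < b be real numbers, let f : ℝ → ℝ be continuous on [a, b], and let μ > 0. Then μ · (x − a)^{−μ} · ∫_a^x (x − z)^{μ−1} f(z) dz tends to f(a) as x tends to a from the right. (Equivalently, the Riemann–Liouville fractional integral of order μ of f satisfies (I^μ_a f)(x) ∼ f(a) (x − a)^μ / Γ(μ+1) as x → a⁺.) -/

import Mathlib

open Real MeasureTheory Filter Topology intervalIntegral

lemma aux_integrable {μ : ℝ} (hμ : 0 < μ) (a x : ℝ) (g : ℝ → ℝ)
    (hg : ContinuousOn g (Set.uIcc a x)) :
    IntervalIntegrable (fun z => (x - z) ^ (μ - 1) * g z) volume a x := by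
  have h1 : IntervalIntegrable (fun z : ℝ => (x - z) ^ (μ - 1)) volume a x := by
    have := (intervalIntegrable_rpow' (r := μ - 1)
        (a := x - x) (b := x - a) (by linarith)).comp_sub_left x
    simpa using this.symm
  exact h1.mul_continuousOn hg

lemma aux_val {μ : ℝ} (hμ : 0 < μ) {a x : ℝ} (hax : a ≤ x) :
    ∫ z in a..x, (x - z) ^ (μ - 1) = (x - a) ^ μ / μ := by
  rw [intervalIntegral.integral_comp_sub_left (fun t => t ^ (μ - 1)) x]
  rw [integral_rpow (Or.inl (by linarith))]
  rw [sub_self, sub_add_cancel, Real.zero_rpow (by linarith), sub_zero]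

theorem rl_integral_asymptotic (a b : ℝ) (hab : a < b) (f : ℝ → ℝ)
    (hf : ContinuousOn f (Set.Icc a b)) (μ : ℝ) (hμ : 0 < μ) :
    Tendsto (fun x : ℝ =>
        μ * (x - a) ^ (-μ) * ∫ z in a..x, (x - z) ^ (μ - 1) * f z)
      (𝓝[>] a) (𝓝 (f a)) := by
  rw [Metric.tendsto_nhdsWithin_nhds]
  intro ε hε
  have hfa : ContinuousWithinAt f (Set.Icc a b) a := hf a (Set.left_mem_Icc.2 hab.le)
  rw [Metric.continuousWithinAt_iff] at hfa
  obtain ⟨δ₁, hδ₁, hδ⟩ := hfa (ε / 2) (by linarith)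
  refine ⟨min δ₁ (b - a), by simp [hδ₁]; linarith, ?_⟩
  intro x hx hxd
  have hax : a < x := hx
  have hdx : x - a < min δ₁ (b - a) := by
    simpa [Real.dist_eq, abs_of_pos (sub_pos.2 hax)] using hxd
  have hxb : x ≤ b := by
    have := (lt_min_iff.1 hdx).2; linarith
  have hxδ : x - a < δ₁ := (lt_min_iff.1 hdx).1
  have hsub : Set.uIcc a x ⊆ Set.Icc a b := by
    rw [Set.uIcc_of_le hax.le]
    exact Set.Icc_subset_Icc le_rfl hxb
  -- bound on f on [a,x]
  have hfb : ∀ z ∈ Set.Icc a x, |f z - f a| ≤ ε / 2 := by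
    intro z hz
    have hz' : z ∈ Set.Icc a b := ⟨hz.1, hz.2.trans hxb⟩
    have : dist z a < δ₁ := by
      rw [Real.dist_eq, abs_of_nonneg (by linarith [hz.1])]
      linarith [hz.2]
    have := hδ hz' this
    rw [Real.dist_eq] at this
    linarith
  have hint2 : IntervalIntegrable (fun z => (x - z) ^ (μ - 1) * (f z - f a)) volume a x :=
    aux_integrable hμ a x _ (((hf.mono hsub).sub continuousOn_const))
  have hint3 : IntervalIntegrable (fun z => (x - z) ^ (μ - 1) * f a) volume a x :=
    aux_integrable hμ a x _ continuousOn_const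
  have hintc : IntervalIntegrable (fun z : ℝ => (x - z) ^ (μ - 1) * (ε / 2)) volume a x :=
    aux_integrable hμ a x _ continuousOn_const
  have hsplit : ∫ z in a..x, (x - z) ^ (μ - 1) * f z
      = (∫ z in a..x, (x - z) ^ (μ - 1) * (f z - f a)) + f a * ((x - a) ^ μ / μ) := by
    have : (fun z => (x - z) ^ (μ - 1) * f z)
        = fun z => (x - z) ^ (μ - 1) * (f z - f a) + (x - z) ^ (μ - 1) * f a := by
      funext z; ring
    rw [this, intervalIntegral.integral_add hint2 hint3,
      intervalIntegral.integral_mul_const, aux_val hμ hax.le]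
    ring
  have hE : |∫ z in a..x, (x - z) ^ (μ - 1) * (f z - f a)| ≤ ε / 2 * ((x - a) ^ μ / μ) := by
    have hb : ∀ᵐ t ∂volume, t ∈ Set.uIoc a x →
        ‖(x - t) ^ (μ - 1) * (f t - f a)‖ ≤ (x - t) ^ (μ - 1) * (ε / 2) := by
      refine Filter.Eventually.of_forall fun t ht => ?_
      rw [Set.uIoc_of_le hax.le] at ht
      have h0 : (0:ℝ) ≤ (x - t) ^ (μ - 1) := Real.rpow_nonneg (by linarith [ht.2]) _
      rw [Real.norm_eq_abs, abs_mul, abs_of_nonneg h0]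
      exact mul_le_mul_of_nonneg_left (hfb t ⟨ht.1.le, ht.2⟩) h0
    have hb' : ∀ᵐ t ∂volume.restrict (Set.uIoc a x),
        ‖(x - t) ^ (μ - 1) * (f t - f a)‖ ≤ (x - t) ^ (μ - 1) * (ε / 2) :=
      (ae_restrict_iff' measurableSet_uIoc).2 hb
    have := intervalIntegral.norm_integral_le_abs_of_norm_le hb' hintc
    rw [Real.norm_eq_abs] at this
    calc |∫ z in a..x, (x - z) ^ (μ - 1) * (f z - f a)|
        ≤ |∫ t in a..x, (x - t) ^ (μ - 1) * (ε / 2)| := this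
      _ = ε / 2 * ((x - a) ^ μ / μ) := by
          rw [intervalIntegral.integral_mul_const, aux_val hμ hax.le,
            abs_of_nonneg (by have h0 : (0:ℝ) < x - a := sub_pos.2 hax; positivity)]
          ring
  have hpow : (x - a) ^ (-μ) * (x - a) ^ μ = 1 := by
    rw [← Real.rpow_add (by linarith)]
    simp
  have hpow' : (0:ℝ) < (x - a) ^ (-μ) := Real.rpow_pos_of_pos (by linarith) _
  rw [Real.dist_eq, hsplit]
  have heq : μ * (x - a) ^ (-μ) *
      ((∫ z in a..x, (x - z) ^ (μ - 1) * (f z - f a)) + f a * ((x - a) ^ μ / μ)) - f a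
      = μ * (x - a) ^ (-μ) * ∫ z in a..x, (x - z) ^ (μ - 1) * (f z - f a) := by
    have h2 : μ * (x - a) ^ (-μ) * (f a * ((x - a) ^ μ / μ)) = f a := by
      field_simp
      linear_combination (f a) * hpow
    rw [mul_add, h2]; ring
  rw [heq, abs_mul, abs_of_nonneg (by positivity : (0:ℝ) ≤ μ * (x - a) ^ (-μ))]
  calc μ * (x - a) ^ (-μ) * |∫ z in a..x, (x - z) ^ (μ - 1) * (f z - f a)|
      ≤ μ * (x - a) ^ (-μ) * (ε / 2 * ((x - a) ^ μ / μ)) := by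
        exact mul_le_mul_of_nonneg_left hE (by positivity)
    _ = ε / 2 * ((x - a) ^ (-μ) * (x - a) ^ μ) := by field_simp
    _ < ε := by rw [hpow]; linarith
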